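/- Let I ⊆ k[x_1,…,x_n] be a monomial ideal, σ ⊂ [n] with |σ| = n−1, say σ = [n]∖{n}. A monomial cycle ū e_σ in the Koszul complex of S/I is a boundary if and only if u ∈ I + x_n·(I : (x_1,…,x_{n−1})). -/

import Mathlib

open MvPolynomial

/-- The Koszul sign `sgn(τ, j) = (-1)^{#{s ∈ τ : s < j}}`. -/
def koszulSgn {n : ℕ} (τ : Finset (Fin n)) (j : Fin n) : ℤ :=
  (-1) ^ ((τ.filter fun s => s < j).card)

/-- The Koszul differential on chains, represented as functions
`Finset (Fin n) → R` (the value at `σ` is the coefficient of `e_σ`):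
`(∂w)(σ) = Σ_{j ∉ σ} sgn(σ ∪ {j}, j) · x_j · w(σ ∪ {j})`. -/
noncomputable def koszulBd {n : ℕ} {R : Type*} [CommRing R] (x : Fin n → R)
    (w : Finset (Fin n) → R) (σ : Finset (Fin n)) : R :=
  ∑ j ∈ σᶜ, koszulSgn (insert j σ) j • (x j * w (insert j σ))

/-- `I` is a monomial ideal: generated by a set of monomials. -/
def IsMonomialIdeal {k : Type*} [Field k] {n : ℕ}
    (I : Ideal (MvPolynomial (Fin n) k)) : Prop :=
  ∃ G : Set (Fin n →₀ ℕ),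
    I = Ideal.span ((fun d => (monomial d (1 : k) : MvPolynomial (Fin n) k)) '' G)

lemma erase_univ_inj {n : ℕ} {i j : Fin n}
    (h : Finset.univ.erase i = Finset.univ.erase j) : i = j := by
  by_contra hne
  have hmem : i ∈ Finset.univ.erase j := Finset.mem_erase.mpr ⟨hne, Finset.mem_univ i⟩
  rw [← h] at hmem
  exact (Finset.mem_erase.mp hmem).1 rfl

lemma compl_erase_univ {n : ℕ} (i : Fin n) :
    (Finset.univ.erase i)ᶜ = ({i} : Finset (Fin n)) := by
  rw [Finset.compl_erase, Finset.compl_univ]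
  rfl

lemma sgn_univ_last {m : ℕ} :
    koszulSgn (Finset.univ : Finset (Fin (m + 1))) (Fin.last m) = (-1) ^ m := by
  unfold koszulSgn
  congr 1
  have h : (Finset.univ.filter fun s => s < Fin.last m)
      = Finset.univ.erase (Fin.last m) := by
    ext s
    simp [Fin.lt_last_iff_ne_last]
  rw [h, Finset.card_erase_of_mem (Finset.mem_univ _), Finset.card_univ, Fintype.card_fin]
  omega

lemma sgn_sgn_smul {n : ℕ} (τ : Finset (Fin n)) (j : Fin n) {M : Type*}
    [AddCommGroup M] (z : M) : koszulSgn τ j • koszulSgn τ j • z = z := by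
  rw [smul_smul]
  unfold koszulSgn
  rw [← pow_add, Even.neg_one_pow ⟨_, rfl⟩, one_smul]

theorem stmt2 {k : Type*} [Field k] {m : ℕ}
    (I : Ideal (MvPolynomial (Fin (m + 1)) k)) (hI : IsMonomialIdeal I)
    (d : Fin (m + 1) →₀ ℕ) (u : MvPolynomial (Fin (m + 1)) k)
    (hu : u = monomial d (1 : k))
    (hcyc : ∀ i : Fin (m + 1), i ≠ Fin.last m → X i * u ∈ I) :
    (∃ w : Finset (Fin (m + 1)) → (MvPolynomial (Fin (m + 1)) k ⧸ I),
        koszulBd (fun i => Ideal.Quotient.mk I (X i)) w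
          = fun τ => if τ = Finset.univ.erase (Fin.last m)
              then Ideal.Quotient.mk I u else 0)
      ↔ u ∈ I + Ideal.span {(X (Fin.last m) : MvPolynomial (Fin (m + 1)) k)} *
            Submodule.colon I
              ((Ideal.span {f | ∃ i : Fin (m + 1), i ≠ Fin.last m ∧ f = X i} :
                Ideal (MvPolynomial (Fin (m + 1)) k)) : Set (MvPolynomial (Fin (m + 1)) k)) := by
  constructor
  · rintro ⟨w, hw⟩
    have key : ∀ i : Fin (m + 1),
        koszulSgn Finset.univ i • (Ideal.Quotient.mk I (X i) * w Finset.univ)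
          = (if i = Fin.last m then Ideal.Quotient.mk I u else 0) := by
      intro i
      have h1 := congrFun hw (Finset.univ.erase i)
      unfold koszulBd at h1
      rw [compl_erase_univ, Finset.sum_singleton,
        Finset.insert_erase (Finset.mem_univ i)] at h1
      rw [h1]
      by_cases hi : i = Fin.last m
      · simp [hi]
      · rw [if_neg (fun h => hi (erase_univ_inj h)), if_neg hi]
    obtain ⟨p, hp⟩ := Ideal.Quotient.mk_surjective (w Finset.univ)
    set c : MvPolynomial (Fin (m + 1)) k := ((-1 : ℤ) ^ m) • p with hc
    have hXi : ∀ i : Fin (m + 1), i ≠ Fin.last m → X i * c ∈ I := by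
      intro i hi
      have h0 := key i
      rw [if_neg hi] at h0
      have h0' : Ideal.Quotient.mk I (X i) * w Finset.univ = 0 := by
        have h2 := congrArg (fun t => koszulSgn Finset.univ i • t) h0
        rw [sgn_sgn_smul, smul_zero] at h2
        exact h2
      have hz : Ideal.Quotient.mk I (X i * p) = 0 := by
        rw [map_mul, hp, h0']
      have hmem : X i * p ∈ I := Ideal.Quotient.eq_zero_iff_mem.mp hz
      have he : X i * c = ((-1 : ℤ) ^ m) • (X i * p) := by
        rw [hc, mul_smul_comm]
      rw [he, zsmul_eq_mul]
      exact Ideal.mul_mem_left _ _ hmem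
    have hcolon : c ∈ Submodule.colon I
        ((Ideal.span {f | ∃ i : Fin (m + 1), i ≠ Fin.last m ∧ f = X i} :
          Ideal (MvPolynomial (Fin (m + 1)) k)) : Set (MvPolynomial (Fin (m + 1)) k)) := by
      rw [Submodule.mem_colon]
      intro q hq
      induction hq using Submodule.span_induction with
      | mem f hf =>
        obtain ⟨i, hi, rfl⟩ := hf
        rw [smul_eq_mul, mul_comm]
        exact hXi i hi
      | zero => simp
      | add a b _ _ ha hb => rw [smul_add]; exact add_mem ha hb
      | smul r a _ ha =>
        rw [smul_comm, smul_eq_mul]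
        exact Ideal.mul_mem_left _ _ ha
    have hlast : u - X (Fin.last m) * c ∈ I := by
      have h0 := key (Fin.last m)
      rw [if_pos rfl, sgn_univ_last] at h0
      have hq : Ideal.Quotient.mk I (X (Fin.last m) * c) = Ideal.Quotient.mk I u := by
        rw [hc, mul_smul_comm, map_zsmul, map_mul, hp]
        exact h0
      exact Ideal.Quotient.eq.mp hq.symm
    have h2 : X (Fin.last m) * c ∈
        Ideal.span {(X (Fin.last m) : MvPolynomial (Fin (m + 1)) k)} *
          Submodule.colon I ((Ideal.span {f | ∃ i : Fin (m + 1), i ≠ Fin.last m ∧ f = X i} :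
            Ideal (MvPolynomial (Fin (m + 1)) k)) : Set (MvPolynomial (Fin (m + 1)) k)) :=
      Ideal.mul_mem_mul (Ideal.mem_span_singleton_self _) hcolon
    have hsplit : u = (u - X (Fin.last m) * c) + X (Fin.last m) * c := by ring
    rw [hsplit, Ideal.add_eq_sup]
    exact add_mem (Ideal.mem_sup_left hlast) (Ideal.mem_sup_right h2)
  · intro h
    rw [Ideal.add_eq_sup] at h
    obtain ⟨a, ha, b, hb, hab⟩ := Submodule.mem_sup.mp h
    obtain ⟨c, hcJ, hcb⟩ := Ideal.mem_span_singleton_mul.mp hb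
    have hcolon : ∀ i : Fin (m + 1), i ≠ Fin.last m → X i * c ∈ I := by
      intro i hi
      have := Submodule.mem_colon.mp hcJ (X i) (Ideal.subset_span ⟨i, hi, rfl⟩)
      rwa [smul_eq_mul, mul_comm] at this
    refine ⟨fun τ => if τ = Finset.univ then ((-1 : ℤ) ^ m) • Ideal.Quotient.mk I c else 0, ?_⟩
    funext τ
    by_cases hτ : ∃ i : Fin (m + 1), τ = Finset.univ.erase i
    · obtain ⟨i, rfl⟩ := hτ
      unfold koszulBd
      rw [compl_erase_univ, Finset.sum_singleton,
        Finset.insert_erase (Finset.mem_univ i)]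
      dsimp only
      rw [if_pos rfl]
      by_cases hi : i = Fin.last m
      · subst hi
        rw [if_pos rfl, sgn_univ_last]
        have hXc : Ideal.Quotient.mk I (X (Fin.last m) * c) = Ideal.Quotient.mk I u := by
          apply Ideal.Quotient.eq.mpr
          have hd : X (Fin.last m) * c - u = -a := by rw [hcb, ← hab]; ring
          rw [hd]
          exact neg_mem ha
        rw [mul_smul_comm, smul_smul, ← pow_add, Even.neg_one_pow ⟨m, rfl⟩, one_smul,
          ← map_mul, hXc]
      · rw [if_neg (fun hh => hi (erase_univ_inj hh))]
        have hz : Ideal.Quotient.mk I (X i * c) = 0 :=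
          Ideal.Quotient.eq_zero_iff_mem.mpr (hcolon i hi)
        rw [mul_smul_comm, ← map_mul, hz, smul_zero, smul_zero]
    · rw [if_neg (fun hh => hτ ⟨Fin.last m, hh⟩)]
      unfold koszulBd
      apply Finset.sum_eq_zero
      intro j hj
      have hne : insert j τ ≠ Finset.univ := by
        intro hh
        exact hτ ⟨j, by rw [← hh, Finset.erase_insert (Finset.mem_compl.mp hj)]⟩
      dsimp only
      rw [if_neg hne, mul_zero, smul_zero]
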